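/- arXiv:1612.00295 — 2 statements merged into one kernel-verified Lean document; each statement's English description precedes it below -/
import Mathlib

section
/- If A ⊆ B are two convex bodies (compact convex sets with nonempty interior) in ℝⁿ with n ≥ 2, then the (n−1)-dimensional Hausdorff measure of the boundary of A is at most that of the boundary of B, i.e. ℋ^{n−1}(∂A) ≤ ℋ^{n−1}(∂B). -/
open MeasureTheory RealInnerProductSpace

section Aux

variable {F : Type*} [NormedAddCommGroup F] [InnerProductSpace ℝ F]

/-- The metric projection characterization implies uniqueness. -/
lemma proj_unique_aux {A : Set F} {y p q : F} (hp : p ∈ A) (hq : q ∈ A)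
    (h1 : ∀ w ∈ A, ⟪y - p, w - p⟫ ≤ 0) (h2 : ∀ w ∈ A, ⟪y - q, w - q⟫ ≤ 0) :
    p = q := by
  have ha := h1 q hq
  have hb := h2 p hp
  have h3 : ⟪y - q, p - q⟫ = - ⟪y - q, q - p⟫ := by
    rw [← inner_neg_right]; congr 1; abel
  rw [h3] at hb
  have key : ⟪q - p, q - p⟫ ≤ 0 := by
    have e : ⟪q - p, q - p⟫ = ⟪y - p, q - p⟫ - ⟪y - q, q - p⟫ := by
      rw [← inner_sub_left]; congr 1; abel
    rw [e]; linarith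
  have h5 : q - p = 0 := real_inner_self_nonpos.mp key
  have := sub_eq_zero.mp h5
  exact this.symm

end Aux

/-- Monotonicity of perimeter: if `A ⊆ B` are convex bodies in `ℝⁿ`, `n ≥ 2`, then
`ℋ^{n-1}(∂A) ≤ ℋ^{n-1}(∂B)`. -/
theorem perimeter_monotone_of_convex_bodies
    (n : ℕ) (hn : 2 ≤ n)
    (A B : Set (EuclideanSpace ℝ (Fin n)))
    (hAcp : IsCompact A) (hAcv : Convex ℝ A) (hAint : (interior A).Nonempty)
    (hBcp : IsCompact B) (hBcv : Convex ℝ B) (hBint : (interior B).Nonempty)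
    (hAB : A ⊆ B) :
    μH[(n : ℝ) - 1] (frontier A) ≤ μH[(n : ℝ) - 1] (frontier B) := by
  have hAcl : IsClosed A := hAcp.isClosed
  have hAne : A.Nonempty := hAint.mono interior_subset
  -- metric projection onto A
  choose P hPA hPdist using
    exists_norm_eq_iInf_of_complete_convex hAne hAcl.isComplete hAcv
  have hchar : ∀ x, ∀ w ∈ A, ⟪x - P x, w - P x⟫ ≤ 0 := fun x =>
    (norm_eq_iInf_iff_real_inner_le_zero hAcv (hPA x)).1 (hPdist x)
  have huniq : ∀ y p, p ∈ A → (∀ w ∈ A, ⟪y - p, w - p⟫ ≤ 0) → P y = p :=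
    fun y p hp hyp => proj_unique_aux (hPA y) hp (hchar y) hyp
  -- P is 1-Lipschitz
  have hLip : LipschitzWith 1 P := by
    apply LipschitzWith.of_dist_le_mul
    intro x y
    simp only [NNReal.coe_one, one_mul, dist_eq_norm]
    set d : EuclideanSpace ℝ (Fin n) := P x - P y with hd
    have h1 : ⟪x - P x, - d⟫ ≤ 0 := by
      have := hchar x (P y) (hPA y)
      have he : (P y - P x : EuclideanSpace ℝ (Fin n)) = -d := by rw [hd]; abel
      rwa [← he]
    have h2 : ⟪y - P y, d⟫ ≤ 0 := hchar y (P x) (hPA x)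
    have h1' : 0 ≤ ⟪x - P x, d⟫ := by rwa [inner_neg_right, neg_nonpos] at h1
    have hkey : ⟪d, d⟫ ≤ ⟪x - y, d⟫ := by
      have e1 : ⟪(x - P x) - (y - P y), d⟫ = ⟪x - y, d⟫ - ⟪d, d⟫ := by
        rw [← inner_sub_left]; congr 1; rw [hd]; abel
      have h3 : 0 ≤ ⟪(x - P x) - (y - P y), d⟫ := by
        rw [inner_sub_left]; linarith
      linarith [e1 ▸ h3]
    have hCS : ⟪x - y, d⟫ ≤ ‖x - y‖ * ‖d‖ := real_inner_le_norm _ _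
    have hdd : ‖d‖ ^ 2 ≤ ‖x - y‖ * ‖d‖ := by
      rw [← real_inner_self_eq_norm_sq]; linarith
    rcases eq_or_lt_of_le (norm_nonneg d) with h0 | h0
    · rw [← h0]; exact norm_nonneg _
    · nlinarith
  -- the key inclusion : frontier A ⊆ P '' frontier B
  have hincl : frontier A ⊆ P '' frontier B := by
    intro x hx
    have hxA : x ∈ A := hAcl.frontier_subset hx
    have hxniA : x ∉ interior A := hx.2
    -- supporting functional
    obtain ⟨f, hf⟩ := geometric_hahn_banach_open_point hAcv.interior isOpen_interior hxniA
    obtain ⟨a₀, ha₀⟩ := hAint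
    -- f ≤ f x on A
    have hfA : ∀ a ∈ A, f a ≤ f x := by
      intro a ha
      have hacl : a ∈ closure (interior A) := by
        have htd : Filter.Tendsto
            (fun k : ℕ => ((1 : ℝ)/(k+1)) • a₀ + ((1 : ℝ) - 1/(k+1)) • a)
            Filter.atTop (nhds a) := by
          have h0 : Filter.Tendsto (fun k : ℕ => (1 : ℝ)/(k+1)) Filter.atTop (nhds 0) :=
            tendsto_one_div_add_atTop_nhds_zero_nat
          have := (h0.smul_const a₀).add
            (((tendsto_const_nhds (x := (1:ℝ))).sub h0).smul_const a)
          simpa using this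
        refine mem_closure_of_tendsto htd (Filter.Eventually.of_forall fun k => ?_)
        have hk : (0:ℝ) < 1/(k+1) := by positivity
        have hk1 : (1:ℝ)/(k+1) ≤ 1 := by
          rw [div_le_one (by positivity)]; linarith [Nat.cast_nonneg (α := ℝ) k]
        exact hAcv.combo_interior_closure_mem_interior ha₀ (subset_closure ha)
          hk (by linarith) (by ring)
      have hcl : closure (interior A) ⊆ {y | f y ≤ f x} :=
        closure_minimal (fun b hb => (hf b hb).le)
          (isClosed_le f.continuous continuous_const)
      exact hcl hacl
    -- outward direction
    set u : EuclideanSpace ℝ (Fin n) :=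
      (InnerProductSpace.toDual ℝ (EuclideanSpace ℝ (Fin n))).symm f with hu
    have hinner : ∀ w : EuclideanSpace ℝ (Fin n), ⟪u, w⟫ = f w := fun w =>
      InnerProductSpace.toDual_symm_apply
    have hune : u ≠ 0 := by
      intro h0
      have h1 : f a₀ = 0 := by rw [← hinner a₀, h0, inner_zero_left]
      have h2 : f x = 0 := by rw [← hinner x, h0, inner_zero_left]
      have h3 := hf a₀ ha₀
      rw [h1, h2] at h3
      exact lt_irrefl 0 h3
    -- the ray leaves B
    obtain ⟨R, hR⟩ := hBcp.isBounded.subset_closedBall 0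
    have hunorm : 0 < ‖u‖ := norm_pos_iff.mpr hune
    set t₀ : ℝ := (R + ‖x‖ + 1) / ‖u‖ with ht₀
    have hxB : x ∈ B := hAB hxA
    have hR0 : 0 ≤ R + ‖x‖ := by
      have := hR hxB
      simp only [Metric.mem_closedBall, dist_zero_right] at this
      linarith [norm_nonneg x]
    have ht₀pos : 0 < t₀ := by positivity
    have ht₀out : x + t₀ • u ∉ B := by
      intro hmem
      have hb := hR hmem
      simp only [Metric.mem_closedBall, dist_zero_right] at hb
      have h1 : ‖t₀ • u‖ ≤ ‖x + t₀ • u‖ + ‖x‖ := by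
        have := norm_sub_le (x + t₀ • u) x
        simpa using this
      have h2 : ‖t₀ • u‖ = R + ‖x‖ + 1 := by
        rw [norm_smul, Real.norm_eq_abs, abs_of_pos ht₀pos, ht₀,
          div_mul_cancel₀ _ hunorm.ne']
      linarith
    -- last point of the ray inside B
    set S : Set ℝ := {t | t ∈ Set.Icc 0 t₀ ∧ x + t • u ∈ B} with hS
    have hS0 : (0:ℝ) ∈ S := ⟨⟨le_refl 0, ht₀pos.le⟩, by simpa using hxB⟩
    have hSbdd : BddAbove S := ⟨t₀, fun t ht => ht.1.2⟩
    have hScl : IsClosed S := by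
      have hrepr : S = Set.Icc 0 t₀ ∩ (fun t : ℝ => x + t • u) ⁻¹' B := rfl
      rw [hrepr]
      exact isClosed_Icc.inter (hBcp.isClosed.preimage
        (continuous_const.add (continuous_id.smul continuous_const)))
    set τ : ℝ := sSup S with hτ
    have hτS : τ ∈ S := hScl.csSup_mem ⟨0, hS0⟩ hSbdd
    have hτnn : 0 ≤ τ := hτS.1.1
    set y : EuclideanSpace ℝ (Fin n) := x + τ • u with hy
    have hyB : y ∈ B := hτS.2
    have hτlt : τ < t₀ := by
      rcases lt_or_eq_of_le hτS.1.2 with h | h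
      · exact h
      · exact absurd (h ▸ hτS.2) ht₀out
    have hyfr : y ∈ frontier B := by
      rw [hBcp.isClosed.frontier_eq, Set.mem_diff]
      refine ⟨hyB, fun hyint => ?_⟩
      obtain ⟨δ, hδpos, hball⟩ := Metric.isOpen_iff.1 isOpen_interior y hyint
      set ε : ℝ := min (δ / (2 * ‖u‖)) (t₀ - τ) with hε
      have hεpos : 0 < ε := lt_min (by positivity) (by linarith)
      have hmem : τ + ε ∈ S := by
        refine ⟨⟨by linarith, by linarith [min_le_right (δ / (2 * ‖u‖)) (t₀ - τ)]⟩, ?_⟩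
        have hdist : x + (τ + ε) • u - y = ε • u := by
          rw [hy, add_smul]; abel
        have : x + (τ + ε) • u ∈ Metric.ball y δ := by
          rw [Metric.mem_ball, dist_eq_norm, hdist, norm_smul, Real.norm_eq_abs,
            abs_of_pos hεpos]
          calc ε * ‖u‖ ≤ (δ / (2 * ‖u‖)) * ‖u‖ := by
                have := min_le_left (δ / (2 * ‖u‖)) (t₀ - τ)
                exact mul_le_mul_of_nonneg_right this hunorm.le
            _ = δ / 2 := by field_simp
            _ < δ := by linarith
        exact interior_subset (hball this)
      have := le_csSup hSbdd hmem
      linarith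
    -- P y = x
    refine ⟨y, hyfr, ?_⟩
    apply huniq y x hxA
    intro w hw
    have hyx : y - x = τ • u := by rw [hy]; abel
    rw [hyx, real_inner_smul_left]
    have hfw : ⟪u, w - x⟫ = f w - f x := by rw [hinner (w - x), map_sub]
    rw [hfw]
    exact mul_nonpos_iff.mpr (Or.inl ⟨hτnn, by linarith [hfA w hw]⟩)
  calc μH[(n : ℝ) - 1] (frontier A) ≤ μH[(n : ℝ) - 1] (P '' frontier B) :=
        measure_mono hincl
    _ ≤ (1 : NNReal) ^ ((n:ℝ)-1) * μH[(n : ℝ) - 1] (frontier B) := by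
        apply hLip.hausdorffMeasure_image_le
        have : (2:ℝ) ≤ n := by exact_mod_cast hn
        linarith
    _ = μH[(n : ℝ) - 1] (frontier B) := by
        simp
end

section
/- Let (X, μ) be a finite measure space and let g: [0,∞)² → [0,∞) be positively 1-homogeneous and convex. Then for all measurable functions f₁, f₂: X → [0,∞) (integrable), g(∫_X f₁ dμ, ∫_X f₂ dμ) ≤ ∫_X g(f₁, f₂) dμ. -/
open MeasureTheory

open scoped Classical

section JensenAux

variable {g : ℝ × ℝ → ℝ}

private lemma jha_gzero
    (hghom : ∀ l : ℝ, 0 < l → ∀ p : ℝ × ℝ, 0 ≤ p.1 → 0 ≤ p.2 →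
      g (l * p.1, l * p.2) = l * g p) : g (0, 0) = 0 := by
  have h := hghom 2 two_pos (0, 0) le_rfl le_rfl
  simp only [mul_zero] at h
  linarith

private lemma jha_glin1
    (hghom : ∀ l : ℝ, 0 < l → ∀ p : ℝ × ℝ, 0 ≤ p.1 → 0 ≤ p.2 →
      g (l * p.1, l * p.2) = l * g p) {s : ℝ} (hs : 0 ≤ s) :
    g (s, 0) = s * g (1, 0) := by
  rcases hs.eq_or_lt with h | h
  · rw [← h, jha_gzero hghom, zero_mul]
  · have := hghom s h (1, 0) zero_le_one le_rfl
    simpa using this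

private lemma jha_glin2
    (hghom : ∀ l : ℝ, 0 < l → ∀ p : ℝ × ℝ, 0 ≤ p.1 → 0 ≤ p.2 →
      g (l * p.1, l * p.2) = l * g p) {t : ℝ} (ht : 0 ≤ t) :
    g (0, t) = t * g (0, 1) := by
  rcases ht.eq_or_lt with h | h
  · rw [← h, jha_gzero hghom, zero_mul]
  · have := hghom t h (0, 1) le_rfl zero_le_one
    simpa using this

private lemma jha_gsub
    (hghom : ∀ l : ℝ, 0 < l → ∀ p : ℝ × ℝ, 0 ≤ p.1 → 0 ≤ p.2 →
      g (l * p.1, l * p.2) = l * g p)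
    (hgconv : ConvexOn ℝ (Set.Ici (0 : ℝ) ×ˢ Set.Ici (0 : ℝ)) g)
    {s₁ t₁ s₂ t₂ : ℝ} (hs₁ : 0 ≤ s₁) (ht₁ : 0 ≤ t₁) (hs₂ : 0 ≤ s₂) (ht₂ : 0 ≤ t₂) :
    g (s₁ + s₂, t₁ + t₂) ≤ g (s₁, t₁) + g (s₂, t₂) := by
  have hmem₁ : ((s₁, t₁) : ℝ × ℝ) ∈ Set.Ici (0 : ℝ) ×ˢ Set.Ici (0 : ℝ) := ⟨hs₁, ht₁⟩
  have hmem₂ : ((s₂, t₂) : ℝ × ℝ) ∈ Set.Ici (0 : ℝ) ×ˢ Set.Ici (0 : ℝ) := ⟨hs₂, ht₂⟩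
  have hc := hgconv.2 hmem₁ hmem₂ (by norm_num : (0:ℝ) ≤ 1/2) (by norm_num : (0:ℝ) ≤ 1/2)
    (by norm_num)
  have hsm : ((1:ℝ)/2) • ((s₁, t₁) : ℝ × ℝ) + ((1:ℝ)/2) • ((s₂, t₂) : ℝ × ℝ)
      = (((s₁ + s₂)/2 : ℝ), ((t₁ + t₂)/2 : ℝ)) := by
    simp only [Prod.smul_mk, smul_eq_mul, Prod.mk_add_mk, Prod.mk.injEq]
    constructor <;> ring
  rw [hsm] at hc
  rw [smul_eq_mul, smul_eq_mul] at hc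
  have h2 := hghom 2 two_pos (((s₁ + s₂)/2 : ℝ), ((t₁ + t₂)/2 : ℝ))
    (by positivity) (by positivity)
  simp only [] at h2
  have hpair : ((s₁ + s₂ : ℝ), (t₁ + t₂ : ℝ))
      = ((2 * ((s₁ + s₂)/2) : ℝ), (2 * ((t₁ + t₂)/2) : ℝ)) := by
    simp only [Prod.mk.injEq]
    constructor <;> ring
  have heq : g (s₁ + s₂, t₁ + t₂) = 2 * g (((s₁ + s₂)/2 : ℝ), ((t₁ + t₂)/2 : ℝ)) := by
    rw [hpair]
    exact h2
  linarith

private lemma jha_gbound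
    (hghom : ∀ l : ℝ, 0 < l → ∀ p : ℝ × ℝ, 0 ≤ p.1 → 0 ≤ p.2 →
      g (l * p.1, l * p.2) = l * g p)
    (hgconv : ConvexOn ℝ (Set.Ici (0 : ℝ) ×ˢ Set.Ici (0 : ℝ)) g)
    {s t : ℝ} (hs : 0 ≤ s) (ht : 0 ≤ t) :
    g (s, t) ≤ s * g (1, 0) + t * g (0, 1) := by
  have h := jha_gsub hghom hgconv hs le_rfl le_rfl ht
  rw [add_zero, zero_add, jha_glin1 hghom hs, jha_glin2 hghom ht] at h
  exact h

end JensenAux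

/-- Jensen's inequality for a positively 1-homogeneous convex function of two integrals:
`g(∫ f₁, ∫ f₂) ≤ ∫ g(f₁, f₂)` on a finite measure space. -/
theorem jensen_homogeneous_convex
    (X : Type*) [MeasurableSpace X] (μ : Measure X) [IsFiniteMeasure μ]
    (g : ℝ × ℝ → ℝ)
    (hg0 : ∀ p : ℝ × ℝ, 0 ≤ p.1 → 0 ≤ p.2 → 0 ≤ g p)
    (hghom : ∀ l : ℝ, 0 < l → ∀ p : ℝ × ℝ, 0 ≤ p.1 → 0 ≤ p.2 →
      g (l * p.1, l * p.2) = l * g p)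
    (hgconv : ConvexOn ℝ (Set.Ici (0 : ℝ) ×ˢ Set.Ici (0 : ℝ)) g)
    (f₁ f₂ : X → ℝ)
    (hf₁m : Measurable f₁) (hf₂m : Measurable f₂)
    (hf₁0 : ∀ x, 0 ≤ f₁ x) (hf₂0 : ∀ x, 0 ≤ f₂ x)
    (hf₁i : Integrable f₁ μ) (hf₂i : Integrable f₂ μ) :
    g (∫ x, f₁ x ∂μ, ∫ x, f₂ x ∂μ) ≤ ∫ x, g (f₁ x, f₂ x) ∂μ := by
  classical
  -- notation
  have ha0 : 0 ≤ g (1, 0) := hg0 (1, 0) zero_le_one le_rfl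
  have hb0 : 0 ≤ g (0, 1) := hg0 (0, 1) le_rfl zero_le_one
  have hI₁ : 0 ≤ ∫ x, f₁ x ∂μ := integral_nonneg hf₁0
  have hI₂ : 0 ≤ ∫ x, f₂ x ∂μ := integral_nonneg hf₂0
  -- the open quadrant, where `g` is continuous
  set S : Set (ℝ × ℝ) := Set.Ioi (0:ℝ) ×ˢ Set.Ioi (0:ℝ) with hS
  have hSopen : IsOpen S := isOpen_Ioi.prod isOpen_Ioi
  have hSsub : S ⊆ Set.Ici (0:ℝ) ×ˢ Set.Ici (0:ℝ) :=
    Set.prod_mono Set.Ioi_subset_Ici_self Set.Ioi_subset_Ici_self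
  have hcontS : ContinuousOn g S :=
    (hgconv.subset hSsub ((convex_Ioi (0:ℝ)).prod (convex_Ioi (0:ℝ)))).continuousOn hSopen
  -- a measurable global modification of `g` agreeing with `g` on the closed quadrant
  set G : ℝ × ℝ → ℝ := fun p => if h : p ∈ S then g p else p.1 * g (1, 0) + p.2 * g (0, 1)
    with hG
  have hGmeas : Measurable G := by
    have hmf : Measurable fun p : S => g (p : ℝ × ℝ) :=
      (continuousOn_iff_continuous_restrict.mp hcontS).measurable
    have hmg : Measurable fun p : (Sᶜ : Set (ℝ × ℝ)) =>
        (p : ℝ × ℝ).1 * g (1, 0) + (p : ℝ × ℝ).2 * g (0, 1) := by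
      exact ((measurable_fst.comp measurable_subtype_coe).mul_const _).add
        ((measurable_snd.comp measurable_subtype_coe).mul_const _)
    exact Measurable.dite hmf hmg hSopen.measurableSet
  have hGeq : ∀ s t : ℝ, 0 ≤ s → 0 ≤ t → G (s, t) = g (s, t) := by
    intro s t hs ht
    by_cases h : ((s, t) : ℝ × ℝ) ∈ S
    · simp [hG, h]
    · have h' : ¬(0 < s ∧ 0 < t) := by
        intro hc; exact h ⟨hc.1, hc.2⟩
      rw [hG]
      simp only [dif_neg h]
      rcases not_and_or.mp h' with h0 | h0
      · have hs0 : s = 0 := le_antisymm (not_lt.mp h0) hs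
        subst hs0
        rw [jha_glin2 hghom ht]; ring
      · have ht0 : t = 0 := le_antisymm (not_lt.mp h0) ht
        subst ht0
        rw [jha_glin1 hghom hs]; ring
  -- measurability and integrability of `g ∘ (f₁, f₂)` (and shifted versions)
  have hcomp : ∀ ε : ℝ, 0 ≤ ε →
      Integrable (fun x => g (f₁ x + ε, f₂ x + ε)) μ := by
    intro ε hε
    have hmeas : Measurable fun x => g (f₁ x + ε, f₂ x + ε) := by
      have : (fun x => g (f₁ x + ε, f₂ x + ε)) = fun x => G (f₁ x + ε, f₂ x + ε) := by
        funext x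
        exact (hGeq _ _ (by linarith [hf₁0 x]) (by linarith [hf₂0 x])).symm
      rw [this]
      exact hGmeas.comp ((hf₁m.add_const ε).prodMk (hf₂m.add_const ε))
    have hdom : Integrable (fun x => (f₁ x + ε) * g (1, 0) + (f₂ x + ε) * g (0, 1)) μ :=
      (((hf₁i.add (integrable_const ε)).mul_const _).add
        ((hf₂i.add (integrable_const ε)).mul_const _))
    refine hdom.mono' hmeas.aestronglyMeasurable ?_
    filter_upwards with x
    have h1 : 0 ≤ f₁ x + ε := by linarith [hf₁0 x]
    have h2 : 0 ≤ f₂ x + ε := by linarith [hf₂0 x]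
    rw [Real.norm_eq_abs, abs_of_nonneg (hg0 _ h1 h2)]
    exact jha_gbound hghom hgconv h1 h2
  have hφint : Integrable (fun x => g (f₁ x, f₂ x)) μ := by
    have := hcomp 0 le_rfl
    simpa using this
  -- boundary cases
  rcases hI₁.eq_or_lt with h₁ | h₁
  · -- ∫ f₁ = 0, hence f₁ = 0 a.e.
    have hf₁z : f₁ =ᵐ[μ] 0 := (integral_eq_zero_iff_of_nonneg hf₁0 hf₁i).mp h₁.symm
    have hRHS : ∫ x, g (f₁ x, f₂ x) ∂μ = (∫ x, f₂ x ∂μ) * g (0, 1) := by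
      have hcong : (fun x => g (f₁ x, f₂ x)) =ᵐ[μ] fun x => f₂ x * g (0, 1) := by
        filter_upwards [hf₁z] with x hx
        rw [hx]
        exact jha_glin2 hghom (hf₂0 x)
      rw [integral_congr_ae hcong, integral_mul_const]
    rw [hRHS, ← h₁, jha_glin2 hghom hI₂]
  rcases hI₂.eq_or_lt with h₂ | h₂
  · -- ∫ f₂ = 0, hence f₂ = 0 a.e.
    have hf₂z : f₂ =ᵐ[μ] 0 := (integral_eq_zero_iff_of_nonneg hf₂0 hf₂i).mp h₂.symm
    have hRHS : ∫ x, g (f₁ x, f₂ x) ∂μ = (∫ x, f₁ x ∂μ) * g (1, 0) := by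
      have hcong : (fun x => g (f₁ x, f₂ x)) =ᵐ[μ] fun x => f₁ x * g (1, 0) := by
        filter_upwards [hf₂z] with x hx
        rw [hx]
        exact jha_glin1 hghom (hf₁0 x)
      rw [integral_congr_ae hcong, integral_mul_const]
    rw [hRHS, ← h₂, jha_glin1 hghom hI₁]
  -- main case: both integrals positive
  have hμ : μ ≠ 0 := by
    rintro rfl
    simp at h₁
  haveI : NeZero μ := ⟨hμ⟩
  set m : ℝ := (μ Set.univ).toReal with hm
  have hm0 : 0 < m :=
    ENNReal.toReal_pos (Measure.measure_univ_ne_zero.mpr hμ) (measure_ne_top μ _)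
  set I₁ : ℝ := ∫ x, f₁ x ∂μ with hI₁def
  set I₂ : ℝ := ∫ x, f₂ x ∂μ with hI₂def
  set R : ℝ := ∫ x, g (f₁ x, f₂ x) ∂μ with hRdef
  set K : ℝ := g (1, 1) with hKdef
  have key : ∀ ε : ℝ, 0 < ε → g (I₁ + ε * m, I₂ + ε * m) ≤ R + ε * K * m := by
    intro ε hε
    have hf₁ε : Integrable (fun x => f₁ x + ε) μ := hf₁i.add (integrable_const ε)
    have hf₂ε : Integrable (fun x => f₂ x + ε) μ := hf₂i.add (integrable_const ε)
    have hFi : Integrable (fun x => ((f₁ x + ε, f₂ x + ε) : ℝ × ℝ)) μ := hf₁ε.prodMk hf₂ε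
    have hsub' : Set.Ici ε ×ˢ Set.Ici ε ⊆ Set.Ici (0:ℝ) ×ˢ Set.Ici (0:ℝ) :=
      Set.prod_mono (Set.Ici_subset_Ici.mpr hε.le) (Set.Ici_subset_Ici.mpr hε.le)
    have hconvε : ConvexOn ℝ (Set.Ici ε ×ˢ Set.Ici ε) g :=
      hgconv.subset hsub' ((convex_Ici ε).prod (convex_Ici ε))
    have hsubS : Set.Ici ε ×ˢ Set.Ici ε ⊆ S :=
      Set.prod_mono (fun x hx => lt_of_lt_of_le hε hx) (fun x hx => lt_of_lt_of_le hε hx)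
    have hcontε : ContinuousOn g (Set.Ici ε ×ˢ Set.Ici ε) := hcontS.mono hsubS
    have hmem : ∀ᵐ x ∂μ, ((f₁ x + ε, f₂ x + ε) : ℝ × ℝ) ∈ Set.Ici ε ×ˢ Set.Ici ε :=
      Filter.Eventually.of_forall fun x =>
        ⟨le_add_of_nonneg_left (hf₁0 x), le_add_of_nonneg_left (hf₂0 x)⟩
    have hgFi : Integrable (g ∘ fun x => ((f₁ x + ε, f₂ x + ε) : ℝ × ℝ)) μ := hcomp ε hε.le
    have hJ := hconvε.map_average_le hcontε (isClosed_Ici.prod isClosed_Ici) hmem hFi hgFi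
    rw [average_pair hf₁ε hf₂ε] at hJ
    -- compute the averages
    have hA₁ : ∫ x, (f₁ x + ε) ∂μ = I₁ + ε * m := by
      rw [integral_add hf₁i (integrable_const ε), integral_const, smul_eq_mul, measureReal_def, ← hm]
      ring
    have hA₂ : ∫ x, (f₂ x + ε) ∂μ = I₂ + ε * m := by
      rw [integral_add hf₂i (integrable_const ε), integral_const, smul_eq_mul, measureReal_def, ← hm]
      ring
    have hav₁ : ⨍ x, (f₁ x + ε) ∂μ = m⁻¹ * (I₁ + ε * m) := by
      rw [average_eq, smul_eq_mul, hA₁, measureReal_def, ← hm]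
    have hav₂ : ⨍ x, (f₂ x + ε) ∂μ = m⁻¹ * (I₂ + ε * m) := by
      rw [average_eq, smul_eq_mul, hA₂, measureReal_def, ← hm]
    rw [hav₁, hav₂] at hJ
    -- scale back by homogeneity
    have hp₁ : 0 ≤ m⁻¹ * (I₁ + ε * m) := by positivity
    have hp₂ : 0 ≤ m⁻¹ * (I₂ + ε * m) := by positivity
    have hscale := hghom m hm0 (m⁻¹ * (I₁ + ε * m), m⁻¹ * (I₂ + ε * m)) hp₁ hp₂
    have hmm : m * (m⁻¹ * (I₁ + ε * m)) = I₁ + ε * m := by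
      field_simp
    have hmm' : m * (m⁻¹ * (I₂ + ε * m)) = I₂ + ε * m := by
      field_simp
    rw [hmm, hmm'] at hscale
    -- bound the right-hand side average
    have hptwise : ∀ x, g (f₁ x + ε, f₂ x + ε) ≤ g (f₁ x, f₂ x) + ε * K := by
      intro x
      have h := jha_gsub hghom hgconv (hf₁0 x) (hf₂0 x) hε.le hε.le
      have hεε : g (ε, ε) = ε * K := by
        have := hghom ε hε (1, 1) zero_le_one zero_le_one
        simpa [hKdef] using this
      rw [hεε] at h
      exact h
    have hintmono : ∫ x, g (f₁ x + ε, f₂ x + ε) ∂μ ≤ R + ε * K * m := by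
      have h1 : ∫ x, g (f₁ x + ε, f₂ x + ε) ∂μ ≤ ∫ x, (g (f₁ x, f₂ x) + ε * K) ∂μ :=
        integral_mono (hcomp ε hε.le) (hφint.add (integrable_const _)) hptwise
      rw [integral_add hφint (integrable_const _), integral_const, smul_eq_mul] at h1
      calc ∫ x, g (f₁ x + ε, f₂ x + ε) ∂μ ≤ R + m * (ε * K) := h1
        _ = R + ε * K * m := by ring
    have havg : ⨍ x, g (f₁ x + ε, f₂ x + ε) ∂μ = m⁻¹ * ∫ x, g (f₁ x + ε, f₂ x + ε) ∂μ := by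
      rw [average_eq, smul_eq_mul, measureReal_def, ← hm]
    calc g (I₁ + ε * m, I₂ + ε * m)
        = m * g (m⁻¹ * (I₁ + ε * m), m⁻¹ * (I₂ + ε * m)) := hscale
      _ ≤ m * ⨍ x, g (f₁ x + ε, f₂ x + ε) ∂μ := by
          apply mul_le_mul_of_nonneg_left _ hm0.le
          exact hJ
      _ = ∫ x, g (f₁ x + ε, f₂ x + ε) ∂μ := by
          rw [havg, ← mul_assoc, mul_inv_cancel₀ hm0.ne', one_mul]
      _ ≤ R + ε * K * m := hintmono
  -- take the limit ε → 0⁺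
  have hgat : ContinuousAt g (I₁, I₂) :=
    hcontS.continuousAt (hSopen.mem_nhds ⟨h₁, h₂⟩)
  have hψ : ContinuousAt (fun ε : ℝ => ((I₁ + ε * m, I₂ + ε * m) : ℝ × ℝ)) 0 := by
    apply ContinuousAt.prodMk <;> fun_prop
  have htend₁ : Filter.Tendsto (fun ε : ℝ => g (I₁ + ε * m, I₂ + ε * m))
      (nhdsWithin 0 (Set.Ioi 0)) (nhds (g (I₁, I₂))) := by
    have hgat' : ContinuousAt g ((fun ε : ℝ => ((I₁ + ε * m, I₂ + ε * m) : ℝ × ℝ)) 0) := by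
      simpa using hgat
    have hc := ContinuousAt.comp (f := fun ε : ℝ => ((I₁ + ε * m, I₂ + ε * m) : ℝ × ℝ)) (x := (0:ℝ)) hgat' hψ
    have ht := hc.tendsto
    have h0 : (g ∘ fun ε : ℝ => ((I₁ + ε * m, I₂ + ε * m) : ℝ × ℝ)) 0 = g (I₁, I₂) := by
      simp [Function.comp]
    rw [h0] at ht
    exact (ht.mono_left nhdsWithin_le_nhds).congr fun ε => by simp [Function.comp]
  have htend₂ : Filter.Tendsto (fun ε : ℝ => R + ε * K * m)
      (nhdsWithin 0 (Set.Ioi 0)) (nhds R) := by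
    have hcont : Continuous (fun ε : ℝ => R + ε * K * m) := by fun_prop
    have := hcont.tendsto 0
    simp only [zero_mul, mul_zero, zero_mul, add_zero] at this
    exact this.mono_left nhdsWithin_le_nhds
  have hev : ∀ᶠ ε in nhdsWithin (0:ℝ) (Set.Ioi 0),
      g (I₁ + ε * m, I₂ + ε * m) ≤ R + ε * K * m := by
    filter_upwards [self_mem_nhdsWithin] with ε hε
    exact key ε hε
  exact le_of_tendsto_of_tendsto htend₁ htend₂ hev
end
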